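/- Let G be a graph with no 2-factor and (A,B) a biased barrier of G. Then |B| ≥ |A| + ∑_{t≥1} t·|𝒞_{2t+1}| + 1, where 𝒞_s is the set of components H of G − (A ∪ B) with e(H,B) = s. -/

import Mathlib

open SimpleGraph

variable {V : Type*}

/-- The number of (ordered) pairs giving edges between `X` and `Y`;
for disjoint `X`, `Y` this is the number of edges between `X` and `Y`. -/
noncomputable def eB (G : SimpleGraph V) (X Y : Set V) : ℕ :=
  Set.ncard {p : V × V | p.1 ∈ X ∧ p.2 ∈ Y ∧ G.Adj p.1 p.2}

/-- The vertex set (in `V`) of a connected component of the induced subgraph on `U`. -/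
def compSupp (G : SimpleGraph V) (U : Set V)
    (C : (G.induce U).ConnectedComponent) : Set V :=
  Subtype.val '' C.supp

/-- `δ(A,B) = 2|A| - 2|B| + ∑_{v ∈ B} d_{G-A}(v) - o(A,B)`, where `o(A,B)` is the
number of components of `G - (A ∪ B)` sending an odd number of edges to `B`. -/
noncomputable def deltaAB (G : SimpleGraph V) (A B : Set V) : ℤ :=
  2 * A.ncard - 2 * B.ncard + eB G B Aᶜ -
    Nat.card {C : (G.induce (A ∪ B)ᶜ).ConnectedComponent //
      Odd (eB G (compSupp G (A ∪ B)ᶜ C) B)}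

/-- A barrier (Tutte pair) of `G`. -/
def IsBarrier (G : SimpleGraph V) (A B : Set V) : Prop :=
  Disjoint A B ∧ deltaAB G A B ≤ -2

/-- A biased barrier: a barrier maximizing `|A|` and, subject to that, minimizing `|B|`. -/
def IsBiasedBarrier (G : SimpleGraph V) (A B : Set V) : Prop :=
  IsBarrier G A B ∧
    ∀ A' B' : Set V, IsBarrier G A' B' →
      A'.ncard ≤ A.ncard ∧ (A'.ncard = A.ncard → B.ncard ≤ B'.ncard)

/-- A `2`-factor is a `2`-regular spanning subgraph. -/
def HasTwoFactor (G : SimpleGraph V) : Prop :=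
  ∃ H : SimpleGraph V, H ≤ G ∧ ∀ v : V, (H.neighborSet v).ncard = 2

/-- The number of components of `G - S`. -/
noncomputable def numComp (G : SimpleGraph V) (S : Set V) : ℕ :=
  Nat.card ((G.induce Sᶜ).ConnectedComponent)

/-- `G` is `t`-tough: every vertex cut `S` satisfies `|S| ≥ t · c(G - S)`. -/
def Tough (t : ℝ) (G : SimpleGraph V) : Prop :=
  ∀ S : Set V, 2 ≤ numComp G S → t * (numComp G S : ℝ) ≤ (S.ncard : ℝ)

/-- The toughness `τ(G) = min_S |S| / c(G - S)` over vertex cuts `S`. -/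
noncomputable def toughness (G : SimpleGraph V) : ℝ :=
  sInf {r : ℝ | ∃ S : Set V, 2 ≤ numComp G S ∧ r = (S.ncard : ℝ) / (numComp G S : ℝ)}

/-- `G` is `k`-connected. -/
def KConnected (k : ℕ) (G : SimpleGraph V) : Prop :=
  k < Nat.card V ∧ ∀ S : Set V, S.ncard < k → (G.induce Sᶜ).Connected

/-- The independence number `α(G)`. -/
noncomputable def indepNum (G : SimpleGraph V) : ℕ :=
  sSup {n : ℕ | ∃ s : Set V, (∀ u ∈ s, ∀ v ∈ s, ¬ G.Adj u v) ∧ s.ncard = n}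

/-- The minimum degree `δ(G)`. -/
noncomputable def minDeg (G : SimpleGraph V) : ℕ :=
  sInf {d : ℕ | ∃ v : V, (G.neighborSet v).ncard = d}

/-- `H` occurs as an induced subgraph of `G`. -/
def IsInducedCopy {W : Type*} (H : SimpleGraph W) (G : SimpleGraph V) : Prop :=
  ∃ f : W ↪ V, ∀ a b : W, G.Adj (f a) (f b) ↔ H.Adj a b

/-- The disjoint union `P_m ∪ k·P_1` of a path on `m` vertices and `k` isolated vertices. -/
def pathUnion (m k : ℕ) : SimpleGraph (Fin m ⊕ Fin k) where
  Adj a b := ∃ i j : Fin m, a = Sum.inl i ∧ b = Sum.inl j ∧ (pathGraph m).Adj i j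
  symm := by refine ⟨?_⟩; rintro a b ⟨i, j, rfl, rfl, h⟩; exact ⟨j, i, rfl, rfl, h.symm⟩
  loopless := by
    refine ⟨?_⟩
    rintro a ⟨i, j, rfl, hj, h⟩
    obtain rfl := Sum.inl.inj hj
    exact (pathGraph m).ne_of_adj h rfl

/-- The join `G ∨ H` of two graphs. -/
def joinG {α β : Type*} (G : SimpleGraph α) (H : SimpleGraph β) :
    SimpleGraph (α ⊕ β) where
  Adj x y :=
    match x, y with
    | Sum.inl a, Sum.inl b => G.Adj a b
    | Sum.inr a, Sum.inr b => H.Adj a b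
    | _, _ => True
  symm := by refine ⟨?_⟩; rintro (a | a) (b | b) h <;> simp_all <;> exact h.symm
  loopless := by refine ⟨?_⟩; rintro (a | a) h <;> simp_all

/-- `a` disjoint copies of the complete graph `K_b`. -/
def cliquesG (a b : ℕ) : SimpleGraph (Fin a × Fin b) where
  Adj p q := p.1 = q.1 ∧ p.2 ≠ q.2
  symm := by refine ⟨?_⟩; rintro p q ⟨h1, h2⟩; exact ⟨h1.symm, h2.symm⟩
  loopless := by refine ⟨?_⟩; rintro p ⟨_, h⟩; exact h rfl

/-- The graph `H_n`: `K_n ∨ (K̄_{2n+1} ∪ K_{2n+1})` together with a perfect matching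
between the independent part and the clique part. -/
def Hgraph (n : ℕ) :
    SimpleGraph (Fin n ⊕ (Fin (2 * n + 1) ⊕ Fin (2 * n + 1))) where
  Adj x y := x ≠ y ∧
    match x, y with
    | Sum.inl _, _ => True
    | _, Sum.inl _ => True
    | Sum.inr (Sum.inl _), Sum.inr (Sum.inl _) => False
    | Sum.inr (Sum.inr _), Sum.inr (Sum.inr _) => True
    | Sum.inr (Sum.inl i), Sum.inr (Sum.inr j) => i = j
    | Sum.inr (Sum.inr i), Sum.inr (Sum.inl j) => i = j
  symm := by
    refine ⟨?_⟩
    rintro (a | a | a) (b | b | b) ⟨hne, h⟩ <;>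
      exact ⟨Ne.symm hne, by simp_all⟩
  loopless := by refine ⟨?_⟩; rintro x ⟨hne, _⟩; exact hne rfl


section Aux

variable {V : Type*}


variable {V : Type*}

lemma card_subtype_sum {α : Type*} [Fintype α] (p : α → Prop) [DecidablePred p] :
    Nat.card {a // p a} = ∑ a : α, if p a then 1 else 0 := by
  rw [Nat.card_eq_fintype_card, Fintype.card_subtype, Finset.card_filter]

lemma fiber_sum {α : Type*} [Fintype α] (f : α → ℕ) (N : ℕ)
    (hN : ∀ a, f a < N) (w : ℕ → ℕ) :
    ∑ t ∈ Finset.range N, w t * Nat.card {a // f a = 2 * t + 1}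
      = ∑ a : α, if Odd (f a) then w ((f a - 1) / 2) else 0 := by
  classical
  have : ∀ t ∈ Finset.range N,
      w t * Nat.card {a // f a = 2 * t + 1}
        = ∑ a : α, if f a = 2 * t + 1 then w t else 0 := by
    intro t _
    rw [card_subtype_sum, Finset.mul_sum]
    simp [mul_ite]
  rw [Finset.sum_congr rfl this, Finset.sum_comm]
  refine Finset.sum_congr rfl fun a _ => ?_
  by_cases h : Odd (f a)
  · obtain ⟨t0, ht0⟩ := h
    have ht0N : t0 ∈ Finset.range N := by
      rw [Finset.mem_range]; have := hN a; omega
    rw [Finset.sum_eq_single t0]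
    · rw [if_pos (by omega : f a = 2 * t0 + 1), if_pos ⟨t0, by omega⟩]
      congr 1; omega
    · intro t _ ht; rw [if_neg (by omega)]
    · intro h; exact absurd ht0N h
  · rw [if_neg h]
    refine Finset.sum_eq_zero fun t _ => ?_
    rw [if_neg (fun hc => h ⟨t, by omega⟩)]

end Aux

theorem stmt7 {V : Type*} [Fintype V] (G : SimpleGraph V) (A B : Set V)
    (hG : ¬ HasTwoFactor G) (hAB : IsBiasedBarrier G A B) :
    A.ncard + (∑' t : ℕ, t * Nat.card {C : (G.induce (A ∪ B)ᶜ).ConnectedComponent //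
      eB G (compSupp G (A ∪ B)ᶜ C) B = 2 * t + 1}) + 1 ≤ B.ncard := by
  classical
  obtain ⟨⟨hdisj, hdelta⟩, -⟩ := hAB
  set U : Set V := (A ∪ B)ᶜ with hUdef
  haveI : Finite (G.induce U).ConnectedComponent := by
    have : Finite ↥U := inferInstance
    exact Quot.finite _
  haveI := Fintype.ofFinite (G.induce U).ConnectedComponent
  set f : (G.induce U).ConnectedComponent → ℕ :=
    fun C => eB G (compSupp G U C) B with hfdef
  show A.ncard + (∑' t : ℕ, t * Nat.card {C : (G.induce U).ConnectedComponent //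
      f C = 2 * t + 1}) + 1 ≤ B.ncard
  set E : (G.induce U).ConnectedComponent → Set (V × V) :=
    fun C => {p : V × V | p.1 ∈ compSupp G U C ∧ p.2 ∈ B ∧ G.Adj p.1 p.2} with hEdef
  have hfC : ∀ C, f C = Nat.card (E C) := fun C => (Nat.card_coe_set_eq _).symm
  have hUsubA : U ⊆ Aᶜ := fun v hv hA => hv (Or.inl hA)
  have hsupp_sub : ∀ C, compSupp G U C ⊆ U := by
    rintro C v ⟨x, hx, rfl⟩; exact x.2
  have hcomp_eq : ∀ (C C' : (G.induce U).ConnectedComponent) (v : V),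
      v ∈ compSupp G U C → v ∈ compSupp G U C' → C = C' := by
    rintro C C' v ⟨x, hx, rfl⟩ ⟨x', hx', hxx⟩
    obtain rfl : x' = x := Subtype.ext hxx
    rw [ConnectedComponent.mem_supp_iff] at hx hx'
    rw [← hx, ← hx']
  -- Step 1: the sum of all component-to-B edge counts is at most eB G B Aᶜ
  have hkey : ∑ C, f C ≤ eB G B Aᶜ := by
    have h1 : ∑ C, f C = Nat.card (Σ C, ↥(E C)) := by
      rw [Nat.card_eq_fintype_card, Fintype.card_sigma]
      exact Finset.sum_congr rfl fun C _ => by rw [hfC C, Nat.card_eq_fintype_card]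
    have h2 : Nat.card (Σ C, ↥(E C)) ≤
        Nat.card ↥{p : V × V | p.1 ∈ B ∧ p.2 ∈ Aᶜ ∧ G.Adj p.1 p.2} := by
      refine Nat.card_le_card_of_injective
        (fun x => ⟨(x.2.1.2, x.2.1.1), x.2.2.2.1,
          hUsubA (hsupp_sub x.1 x.2.2.1), x.2.2.2.2.symm⟩) ?_
      rintro ⟨C, ⟨⟨v, b⟩, hp⟩⟩ ⟨C', ⟨⟨v', b'⟩, hp'⟩⟩ h
      simp only [Subtype.mk.injEq, Prod.mk.injEq] at h
      obtain ⟨rfl, rfl⟩ := h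
      obtain rfl := hcomp_eq C C' v hp.1 hp'.1
      rfl
    have h3 : eB G B Aᶜ = Nat.card ↥{p : V × V | p.1 ∈ B ∧ p.2 ∈ Aᶜ ∧ G.Adj p.1 p.2} :=
      (Nat.card_coe_set_eq _).symm
    omega
  -- the bound N
  set N : ℕ := Fintype.card (V × V) + 1 with hNdef
  have hN : ∀ C, f C < N := by
    intro C
    have : f C ≤ (Set.univ : Set (V × V)).ncard :=
      Set.ncard_le_ncard (Set.subset_univ _) Set.finite_univ
    rw [Set.ncard_univ, Nat.card_eq_fintype_card] at this
    omega
  -- Step 2: rewrite the tsum as a finite sum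
  have htsum : (∑' t : ℕ, t * Nat.card {C : (G.induce U).ConnectedComponent //
      f C = 2 * t + 1}) = ∑ t ∈ Finset.range N, t * Nat.card {C // f C = 2 * t + 1} := by
    refine tsum_eq_sum ?_
    intro t ht
    rw [Finset.mem_range, not_lt] at ht
    haveI : IsEmpty {C : (G.induce U).ConnectedComponent // f C = 2 * t + 1} :=
      ⟨fun ⟨C, hC⟩ => by have := hN C; omega⟩
    simp
  -- Step 3: fiber sums
  have hT := fiber_sum f N hN (fun t => t)
  have hS1 := fiber_sum f N hN (fun t => 2 * t + 1)
  have hS1' : ∑ C, (if Odd (f C) then 2 * ((f C - 1) / 2) + 1 else 0)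
      = ∑ C, (if Odd (f C) then f C else 0) := by
    refine Finset.sum_congr rfl fun C _ => ?_
    by_cases h : Odd (f C)
    · obtain ⟨k, hk⟩ := h
      rw [if_pos ⟨k, hk⟩, if_pos ⟨k, hk⟩]; omega
    · rw [if_neg h, if_neg h]
  have hodd_le : ∑ C, (if Odd (f C) then f C else 0) ≤ ∑ C, f C :=
    Finset.sum_le_sum fun C _ => by split <;> omega
  have hexp : ∑ t ∈ Finset.range N, (2 * t + 1) * Nat.card {C // f C = 2 * t + 1}
      = 2 * (∑ t ∈ Finset.range N, t * Nat.card {C // f C = 2 * t + 1})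
        + ∑ t ∈ Finset.range N, Nat.card {C // f C = 2 * t + 1} := by
    rw [Finset.mul_sum, ← Finset.sum_add_distrib]
    exact Finset.sum_congr rfl fun t _ => by ring
  have hOcount : Nat.card {C : (G.induce U).ConnectedComponent // Odd (f C)}
      = ∑ t ∈ Finset.range N, Nat.card {C // f C = 2 * t + 1} := by
    have h1 := fiber_sum f N hN (fun _ => 1)
    simp only [one_mul] at h1
    rw [card_subtype_sum, h1]
  -- Step 4: combine
  have hmain : 2 * (∑ t ∈ Finset.range N, t * Nat.card {C // f C = 2 * t + 1})
      + Nat.card {C : (G.induce U).ConnectedComponent // Odd (f C)} ≤ eB G B Aᶜ := by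
    have : ∑ t ∈ Finset.range N, (2 * t + 1) * Nat.card {C // f C = 2 * t + 1}
        ≤ eB G B Aᶜ := by
      rw [hS1, hS1']
      omega
    omega
  -- unfold deltaAB
  rw [deltaAB] at hdelta
  rw [htsum]
  have ho : Nat.card {C : (G.induce (A ∪ B)ᶜ).ConnectedComponent //
      Odd (eB G (compSupp G (A ∪ B)ᶜ C) B)}
      = Nat.card {C : (G.induce U).ConnectedComponent // Odd (f C)} := rfl
  rw [ho] at hdelta
  omega
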